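/- Let F̆ ∈ M̆ with mean m̆ := ∫₀¹ F̆(u)du and standard deviation s̆ := ‖F̆ − m̆‖_{L²} > 0, let ε > 0, and let m ∈ ℝ with |m̆ − m| ≤ ε; write Δm := m̆ − m. Then the supremum of ‖g − m‖_{L²} over all g ∈ M̆_ε satisfying ∫₀¹ g(u)du = m equals s̆ + √(ε² − (Δm)²), and it is attained by the function ḡ(u) := (1 + √(ε² − (Δm)²)/s̆)(F̆(u) − m̆) + m, which belongs to M̆_ε and has ∫₀¹ ḡ(u)du = m. -/

import Mathlib

open MeasureTheory Set

noncomputable section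

/-- Lebesgue measure restricted to `[0,1]`. -/
def μ01 : Measure ℝ := volume.restrict (Icc (0:ℝ) 1)

instance : IsFiniteMeasure μ01 := by
  constructor
  simp [μ01, Real.volume_Icc]

/-- The set `M̆` of elements of `L²([0,1])` admitting a nondecreasing representative. -/
def Mqf : Set (Lp ℝ 2 μ01) :=
  {g | ∃ g₀ : ℝ → ℝ, MonotoneOn g₀ (Icc (0:ℝ) 1) ∧ (g : ℝ → ℝ) =ᵐ[μ01] g₀}

/-- The `ε`-Wasserstein ball of quantile functions around `F`. -/
def Mball (F : Lp ℝ 2 μ01) (ε : ℝ) : Set (Lp ℝ 2 μ01) :=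
  {g ∈ Mqf | ‖g - F‖ ≤ ε}

instance : IsProbabilityMeasure μ01 := ⟨by simp [μ01, Real.volume_Icc]⟩

open scoped RealInnerProductSpace

lemma intLp (f : Lp ℝ 2 μ01) : Integrable f μ01 :=
  (Lp.memLp f).integrable (by norm_num)

lemma inner_const_left' (c : ℝ) (f : Lp ℝ 2 μ01) :
    ⟪Lp.const 2 μ01 c, f⟫ = c * ∫ u, f u ∂μ01 := by
  rw [L2.inner_def, ← integral_const_mul]
  refine integral_congr_ae ?_
  filter_upwards [Lp.coeFn_const 2 μ01 c] with x hx
  simp [hx, RCLike.inner_apply, Function.const, mul_comm]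

lemma int_const' (c : ℝ) : ∫ u, (Lp.const 2 μ01 c) u ∂μ01 = c := by
  rw [integral_congr_ae (Lp.coeFn_const 2 μ01 c)]; simp

lemma norm_const01 (c : ℝ) : ‖Lp.const 2 μ01 c‖ = |c| := by
  rw [Lp.norm_const] <;> simp

lemma int_sub' (f g : Lp ℝ 2 μ01) :
    ∫ u, (f - g : Lp ℝ 2 μ01) u ∂μ01 = (∫ u, f u ∂μ01) - ∫ u, g u ∂μ01 := by
  rw [integral_congr_ae (Lp.coeFn_sub f g)]
  exact integral_sub (intLp f) (intLp g)

lemma int_add' (f g : Lp ℝ 2 μ01) :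
    ∫ u, (f + g : Lp ℝ 2 μ01) u ∂μ01 = (∫ u, f u ∂μ01) + ∫ u, g u ∂μ01 := by
  rw [integral_congr_ae (Lp.coeFn_add f g)]
  exact integral_add (intLp f) (intLp g)

lemma int_smul' (a : ℝ) (f : Lp ℝ 2 μ01) :
    ∫ u, (a • f : Lp ℝ 2 μ01) u ∂μ01 = a * ∫ u, f u ∂μ01 := by
  rw [integral_congr_ae (Lp.coeFn_smul a f)]
  simp [integral_const_mul]

theorem stmt1 (F : Lp ℝ 2 μ01) (hF : F ∈ Mqf) (ε : ℝ) (hε : 0 < ε)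
    (mF s m : ℝ) (hmF : mF = ∫ u, F u ∂μ01)
    (hs : s = ‖F - Lp.const 2 μ01 mF‖) (hs0 : 0 < s)
    (hm : |mF - m| ≤ ε) :
    IsGreatest
      ((fun g : Lp ℝ 2 μ01 => ‖g - Lp.const 2 μ01 m‖) ''
        {g ∈ Mball F ε | (∫ u, g u ∂μ01) = m})
      (s + Real.sqrt (ε ^ 2 - (mF - m) ^ 2)) ∧
    (1 + Real.sqrt (ε ^ 2 - (mF - m) ^ 2) / s) • (F - Lp.const 2 μ01 mF) + Lp.const 2 μ01 m
      ∈ {g ∈ Mball F ε | (∫ u, g u ∂μ01) = m} ∧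
    ‖(1 + Real.sqrt (ε ^ 2 - (mF - m) ^ 2) / s) • (F - Lp.const 2 μ01 mF) + Lp.const 2 μ01 m
        - Lp.const 2 μ01 m‖
      = s + Real.sqrt (ε ^ 2 - (mF - m) ^ 2) := by
  set Δ : ℝ := Real.sqrt (ε ^ 2 - (mF - m) ^ 2) with hΔ
  have hc2 : (mF - m) ^ 2 ≤ ε ^ 2 := by
    rw [← sq_abs]; exact pow_le_pow_left₀ (abs_nonneg _) hm 2
  have hΔ0 : 0 ≤ Δ := Real.sqrt_nonneg _
  have hΔsq : Δ ^ 2 = ε ^ 2 - (mF - m) ^ 2 := Real.sq_sqrt (by linarith)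
  set a : ℝ := 1 + Δ / s with ha
  have ha0 : (0:ℝ) ≤ a := by positivity
  set G : Lp ℝ 2 μ01 := a • (F - Lp.const 2 μ01 mF) + Lp.const 2 μ01 m with hG
  have hint1 : ∫ u, (F - Lp.const 2 μ01 mF : Lp ℝ 2 μ01) u ∂μ01 = 0 := by
    rw [int_sub', int_const', ← hmF]; ring
  -- norm of G - const m
  have hGm : G - Lp.const 2 μ01 m = a • (F - Lp.const 2 μ01 mF) := by
    rw [hG]; abel
  have hnormGm : ‖G - Lp.const 2 μ01 m‖ = s + Δ := by
    rw [hGm, norm_smul, Real.norm_eq_abs, abs_of_nonneg ha0, ← hs, ha]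
    field_simp
  -- norm of G - F
  have hGF : G - F = (Δ / s) • (F - Lp.const 2 μ01 mF) + Lp.const 2 μ01 (m - mF) := by
    rw [hG, ha, map_sub (Lp.const 2 μ01) m mF]
    module
  have hinner0 : ⟪F - Lp.const 2 μ01 mF, Lp.const 2 μ01 (m - mF)⟫ = 0 := by
    rw [real_inner_comm, inner_const_left', hint1]; ring
  have hnormGF2 : ‖G - F‖ ^ 2 = ε ^ 2 := by
    rw [hGF, norm_add_sq_real, real_inner_smul_left, hinner0, norm_smul, norm_const01,
      Real.norm_eq_abs, abs_of_nonneg (by positivity : (0:ℝ) ≤ Δ / s), ← hs, sq_abs]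
    have : (Δ / s) ^ 2 * s ^ 2 = Δ ^ 2 := by field_simp
    rw [mul_pow, this, hΔsq]; ring
  have hnormGF : ‖G - F‖ = ε := by
    rw [← Real.sqrt_sq (norm_nonneg (G - F)), hnormGF2, Real.sqrt_sq hε.le]
  -- integral of G
  have hintG : ∫ u, G u ∂μ01 = m := by
    rw [hG, int_add', int_smul', hint1, int_const']; ring
  -- monotone representative of G
  obtain ⟨F₀, hF₀mono, hF₀ae⟩ := hF
  have hGMqf : G ∈ Mqf := by
    refine ⟨fun u => a * (F₀ u - mF) + m, ?_, ?_⟩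
    · intro x hx y hy hxy
      have h := hF₀mono hx hy hxy
      simp only
      nlinarith [mul_nonneg ha0 (sub_nonneg.2 h)]
    · have h1 := Lp.coeFn_add (a • (F - Lp.const 2 μ01 mF)) (Lp.const 2 μ01 m)
      have h2 := Lp.coeFn_smul a (F - Lp.const 2 μ01 mF)
      have h3 := Lp.coeFn_sub F (Lp.const 2 μ01 mF)
      have h4 := Lp.coeFn_const 2 μ01 mF
      have h5 := Lp.coeFn_const 2 μ01 m
      rw [hG]
      filter_upwards [h1, h2, h3, h4, h5, hF₀ae] with x e1 e2 e3 e4 e5 e6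
      simp only [Pi.add_apply, Pi.smul_apply, Pi.sub_apply, Function.const] at *
      rw [e1, e2, e3, e4, e5, e6]
      simp [smul_eq_mul]
    -- membership of G in the feasible set
  have hGmem : G ∈ {g ∈ Mball F ε | (∫ u, g u ∂μ01) = m} := by
    exact ⟨⟨hGMqf, by rw [hnormGF]⟩, hintG⟩
  refine ⟨⟨⟨G, hGmem, hnormGm⟩, ?_⟩, hGmem, hnormGm⟩
  -- upper bound
  rintro x ⟨g, ⟨⟨hgMqf, hgball⟩, hgint⟩, rfl⟩
  simp only
  have hdecomp : g - Lp.const 2 μ01 m =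
      ((g - F) + Lp.const 2 μ01 (mF - m)) + (F - Lp.const 2 μ01 mF) := by
    rw [map_sub (Lp.const 2 μ01) mF m]; abel
  have hinn : ⟪g - F, Lp.const 2 μ01 (mF - m)⟫ = -(mF - m) ^ 2 := by
    rw [real_inner_comm, inner_const_left', int_sub', hgint, ← hmF]; ring
  have hsq : ‖(g - F) + Lp.const 2 μ01 (mF - m)‖ ^ 2 ≤ Δ ^ 2 := by
    rw [norm_add_sq_real, hinn, norm_const01, sq_abs, hΔsq]
    have h1 : ‖g - F‖ ^ 2 ≤ ε ^ 2 := pow_le_pow_left₀ (norm_nonneg _) hgball 2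
    nlinarith
  have hle : ‖(g - F) + Lp.const 2 μ01 (mF - m)‖ ≤ Δ := by
    have := Real.sqrt_le_sqrt hsq
    rwa [Real.sqrt_sq (norm_nonneg _), Real.sqrt_sq hΔ0] at this
  calc ‖g - Lp.const 2 μ01 m‖
      = ‖((g - F) + Lp.const 2 μ01 (mF - m)) + (F - Lp.const 2 μ01 mF)‖ := by rw [← hdecomp]
    _ ≤ ‖(g - F) + Lp.const 2 μ01 (mF - m)‖ + ‖F - Lp.const 2 μ01 mF‖ := norm_add_le _ _
    _ ≤ Δ + s := by rw [← hs]; exact add_le_add_left hle s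
    _ = s + Δ := add_comm _ _
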